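/- Suppose x_{1,21} = x_{1,31} = x_{1,32} = 0 and x_{1,41} = x_{1,42} = x_{1,43} = x_{1,51} = x_{1,52} = x_{1,53} = 0 (so the entire upper-left 3×3 block of x₁ and the first two rows of its lower-left 3×3 block vanish), and suppose x_{2,21} = x_{2,31} = x_{2,32} = 0. Then Y⁴ divides D(X,Y) in k[X,Y]. (This is the contrapositive form of Proposition (3.14)(8): if x ∈ L₁₃ is semistable, then x_{2,21} or x_{2,31} or x_{2,32} is nonzero.) -/

import Mathlib

open Matrix MvPolynomial

set_option maxRecDepth 4000 in
/-- Proposition (3.14)(8), contrapositive: if the upper-left `3×3` block of `x₁` and the first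
two rows of its lower-left `3×3` block vanish, and `x_{2,21} = x_{2,31} = x_{2,32} = 0`,
then `Y⁴` divides `D(X,Y)`. -/
theorem divides_pow_four_L13 {k : Type*} [Field k] (x₁ x₂ : Matrix (Fin 6) (Fin 6) k)
    (h1alt : x₁ᵀ = -x₁) (h1diag : ∀ j, x₁ j j = 0)
    (h2alt : x₂ᵀ = -x₂) (h2diag : ∀ j, x₂ j j = 0)
    (h121 : x₁ 1 0 = 0)
    (h131 : x₁ 2 0 = 0)
    (h132 : x₁ 2 1 = 0)
    (h141 : x₁ 3 0 = 0)
    (h142 : x₁ 3 1 = 0)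
    (h143 : x₁ 3 2 = 0)
    (h151 : x₁ 4 0 = 0)
    (h152 : x₁ 4 1 = 0)
    (h153 : x₁ 4 2 = 0)
    (h221 : x₂ 1 0 = 0)
    (h231 : x₂ 2 0 = 0)
    (h232 : x₂ 2 1 = 0) :
    (X 1 : MvPolynomial (Fin 2) k) ^ 4 ∣
      (Matrix.of fun a b =>
        (X 0 : MvPolynomial (Fin 2) k) * C (x₁ a b) + X 1 * C (x₂ a b)).det := by
  classical
  have h1 : ∀ i j, x₁ j i = - x₁ i j := fun i j => by
    simpa using congrFun (congrFun h1alt i) j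
  have h2 : ∀ i j, x₂ j i = - x₂ i j := fun i j => by
    simpa using congrFun (congrFun h2alt i) j
  have e101 : x₁ 0 1 = 0 := by rw [h1 1 0, h121, neg_zero]
  have e102 : x₁ 0 2 = 0 := by rw [h1 2 0, h131, neg_zero]
  have e112 : x₁ 1 2 = 0 := by rw [h1 2 1, h132, neg_zero]
  have e103 : x₁ 0 3 = 0 := by rw [h1 3 0, h141, neg_zero]
  have e113 : x₁ 1 3 = 0 := by rw [h1 3 1, h142, neg_zero]
  have e123 : x₁ 2 3 = 0 := by rw [h1 3 2, h143, neg_zero]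
  have e104 : x₁ 0 4 = 0 := by rw [h1 4 0, h151, neg_zero]
  have e114 : x₁ 1 4 = 0 := by rw [h1 4 1, h152, neg_zero]
  have e124 : x₁ 2 4 = 0 := by rw [h1 4 2, h153, neg_zero]
  have e201 : x₂ 0 1 = 0 := by rw [h2 1 0, h221, neg_zero]
  have e202 : x₂ 0 2 = 0 := by rw [h2 2 0, h231, neg_zero]
  have e212 : x₂ 1 2 = 0 := by rw [h2 2 1, h232, neg_zero]
  set Y : MvPolynomial (Fin 2) k := X 1 with hY
  set M : Matrix (Fin 6) (Fin 6) (MvPolynomial (Fin 2) k) :=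
    Matrix.of fun a b => (X 0 : MvPolynomial (Fin 2) k) * C (x₁ a b) + Y * C (x₂ a b) with hMdef
  -- quantified vanishing facts
  have zM1 : ∀ i j : Fin 3, x₁ (Fin.castAdd 3 i) (Fin.castAdd 3 j) = 0 := by
    intro i j
    fin_cases i <;> fin_cases j <;> first | assumption | exact h1diag _
  have zM2 : ∀ i j : Fin 3, x₂ (Fin.castAdd 3 i) (Fin.castAdd 3 j) = 0 := by
    intro i j
    fin_cases i <;> fin_cases j <;> first | assumption | exact h2diag _
  have wC0 : ∀ j : Fin 3, x₁ ((0 : Fin 3).addNat 3) (Fin.castAdd 3 j) = 0 := by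
    intro j; fin_cases j <;> assumption
  have wC1 : ∀ j : Fin 3, x₁ ((1 : Fin 3).addNat 3) (Fin.castAdd 3 j) = 0 := by
    intro j; fin_cases j <;> assumption
  have wB0 : ∀ i : Fin 3, x₁ (Fin.castAdd 3 i) ((0 : Fin 3).addNat 3) = 0 := by
    intro i; fin_cases i <;> assumption
  have wB1 : ∀ i : Fin 3, x₁ (Fin.castAdd 3 i) ((1 : Fin 3).addNat 3) = 0 := by
    intro i; fin_cases i <;> assumption
  set B : Matrix (Fin 3) (Fin 3) (MvPolynomial (Fin 2) k) :=
    Matrix.of fun i j => M (Fin.castAdd 3 i) (Fin.natAdd 3 j) with hB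
  set Cm : Matrix (Fin 3) (Fin 3) (MvPolynomial (Fin 2) k) :=
    Matrix.of fun i j => M (Fin.natAdd 3 i) (Fin.castAdd 3 j) with hC
  set Dm : Matrix (Fin 3) (Fin 3) (MvPolynomial (Fin 2) k) :=
    Matrix.of fun i j => M (Fin.natAdd 3 i) (Fin.natAdd 3 j) with hD
  have hsub : M.submatrix finSumFinEquiv finSumFinEquiv = Matrix.fromBlocks 0 B Cm Dm := by
    refine Matrix.ext fun i j => ?_
    rcases i with i | i <;> rcases j with j | j
    · simp only [Matrix.submatrix_apply, Matrix.fromBlocks_apply₁₁, Matrix.zero_apply,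
        finSumFinEquiv_apply_left, hMdef, Matrix.of_apply, zM1 i j, zM2 i j, map_zero,
        mul_zero, add_zero]
    · rfl
    · rfl
    · rfl
  have hprod : (∏ i, (![Y, Y, 1] : Fin 3 → MvPolynomial (Fin 2) k) i) = Y ^ 2 := by
    rw [Fin.prod_univ_three]; simp [sq]
  have hdC : Y ^ 2 ∣ Cm.det := by
    have hCfac : Cm = Matrix.diagonal ![Y, Y, 1] * Matrix.of (fun i j =>
        if i = 2 then Cm 2 j else C (x₂ (Fin.natAdd 3 i) (Fin.castAdd 3 j))) := by
      refine Matrix.ext fun i j => ?_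
      rw [Matrix.diagonal_mul, Matrix.of_apply]
      have hi : i = 0 ∨ i = 1 ∨ i = 2 := by omega
      rcases hi with rfl | rfl | rfl
      · simp [hC, hMdef, wC0 j]; exact wC0 j
      · simp [hC, hMdef, wC1 j]; exact wC1 j
      · simp
    rw [hCfac, Matrix.det_mul, Matrix.det_diagonal, hprod]
    exact Dvd.dvd.mul_right dvd_rfl _
  have hdB : Y ^ 2 ∣ B.det := by
    have hBfac : B = Matrix.of (fun i j =>
        if j = 2 then B i 2 else C (x₂ (Fin.castAdd 3 i) (Fin.natAdd 3 j))) *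
        Matrix.diagonal ![Y, Y, 1] := by
      refine Matrix.ext fun i j => ?_
      rw [Matrix.mul_diagonal, Matrix.of_apply]
      have hj : j = 0 ∨ j = 1 ∨ j = 2 := by omega
      rcases hj with rfl | rfl | rfl
      · simp [hB, hMdef, wB0 i, mul_comm]; exact wB0 i
      · simp [hB, hMdef, wB1 i, mul_comm]; exact wB1 i
      · simp
    rw [hBfac, Matrix.det_mul, Matrix.det_diagonal, hprod]
    exact Dvd.dvd.mul_left dvd_rfl _
  have key : Y ^ 4 ∣ (Matrix.fromBlocks 0 B Cm Dm).det := by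
    have hfac : (Matrix.fromBlocks 0 B Cm Dm) =
        Matrix.fromBlocks B 0 Dm Cm * Matrix.fromBlocks 0 1 1 0 := by
      rw [Matrix.fromBlocks_multiply]
      simp
    rw [hfac, Matrix.det_mul, Matrix.det_fromBlocks_zero₁₂]
    refine Dvd.dvd.mul_right ?_ _
    rw [show Y ^ 4 = Y ^ 2 * Y ^ 2 by ring]
    exact mul_dvd_mul hdB hdC
  calc Y ^ 4 ∣ (Matrix.fromBlocks 0 B Cm Dm).det := key
    _ = M.det := by rw [← hsub, Matrix.det_submatrix_equiv_self]
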